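/- arXiv:1707.06485 — 3 statements merged into one kernel-verified Lean document; each statement's English description precedes it below -/
import Mathlib

section
/- For any real matrix X of size n×p, the nuclear norm of X equals the minimum of ‖A‖_F · ‖B‖_F over all factorizations X = AB. -/
open Matrix BigOperators

lemma cs_sqrt {ι : Type*} (s : Finset ι) (f g : ι → ℝ) :
    ∑ i ∈ s, f i * g i ≤ Real.sqrt (∑ i ∈ s, f i ^ 2) * Real.sqrt (∑ i ∈ s, g i ^ 2) := by
  calc ∑ i ∈ s, f i * g i ≤ |∑ i ∈ s, f i * g i| := le_abs_self _
    _ = Real.sqrt ((∑ i ∈ s, f i * g i) ^ 2) := (Real.sqrt_sq_eq_abs _).symm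
    _ ≤ Real.sqrt ((∑ i ∈ s, f i ^ 2) * ∑ i ∈ s, g i ^ 2) :=
        Real.sqrt_le_sqrt (Finset.sum_mul_sq_le_sq_mul_sq s f g)
    _ = _ := Real.sqrt_mul (Finset.sum_nonneg fun i _ => sq_nonneg _) _

lemma sq2_eq_trace {m k : Type*} [Fintype m] [Fintype k] (M : Matrix m k ℝ) :
    ∑ i, ∑ j, M i j ^ 2 = (Mᴴ * M).trace := by
  rw [Finset.sum_comm]
  simp [Matrix.trace, Matrix.mul_apply, Matrix.diag, sq]

lemma sq2_eq_trace' {m k : Type*} [Fintype m] [Fintype k] (M : Matrix m k ℝ) :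
    ∑ i, ∑ j, M i j ^ 2 = (M * Mᴴ).trace := by
  simp [Matrix.trace, Matrix.mul_apply, Matrix.diag, sq]

lemma trace_proj_le {m k : Type*} [Fintype m] [Fintype k]
    (Q : Matrix m m ℝ) (A : Matrix m k ℝ) (hQs : Qᴴ = Q) (hQ2 : Q * Q = Q) :
    ((Q * A)ᴴ * (Q * A)).trace ≤ (Aᴴ * A).trace := by
  have hQA : (Q * A)ᴴ = Aᴴ * Q := by rw [conjTranspose_mul, hQs]
  have h3 : Aᴴ * Q * (Q * A) = Aᴴ * Q * A := by
    rw [Matrix.mul_assoc Aᴴ Q (Q*A), ← Matrix.mul_assoc Q Q A, hQ2, ← Matrix.mul_assoc]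
  have key : (Q*A)ᴴ * (Q*A) + (A - Q*A)ᴴ * (A - Q*A) = Aᴴ * A := by
    rw [conjTranspose_sub, hQA, Matrix.sub_mul, Matrix.mul_sub, Matrix.mul_sub, h3, ← Matrix.mul_assoc]
    abel
  have h0 : 0 ≤ ((A - Q*A)ᴴ * (A - Q*A)).trace := by
    rw [← sq2_eq_trace]
    positivity
  have htr := congrArg Matrix.trace key
  rw [Matrix.trace_add] at htr
  linarith

/-- Frobenius norm of a real matrix. -/
noncomputable def frobNorm {m n : Type*} [Fintype m] [Fintype n]
    (X : Matrix m n ℝ) : ℝ :=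
  Real.sqrt (∑ i, ∑ j, (X i j) ^ 2)

/-- Nuclear norm: sum of singular values, i.e. the sum of the square roots of
the eigenvalues of `Xᴴ * X`. -/
noncomputable def nuclearNorm {m n : Type*} [Fintype m] [Fintype n] [DecidableEq n]
    (X : Matrix m n ℝ) : ℝ :=
  ∑ i, Real.sqrt ((Matrix.isHermitian_conjTranspose_mul_self X).eigenvalues i)

/-- the nuclear norm of `X` is the minimum of `‖A‖_F * ‖B‖_F`
over all factorizations `X = A * B`. -/
theorem nuclearNorm_isLeast_factorization (n p : ℕ) (X : Matrix (Fin n) (Fin p) ℝ) :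
    IsLeast {c : ℝ | ∃ (k : ℕ) (A : Matrix (Fin n) (Fin k) ℝ) (B : Matrix (Fin k) (Fin p) ℝ),
        X = A * B ∧ c = frobNorm A * frobNorm B}
      (nuclearNorm X) := by
  classical
  have hX := Matrix.isHermitian_conjTranspose_mul_self X
  set lam : Fin p → ℝ := hX.eigenvalues with hlam
  set V : Matrix (Fin p) (Fin p) ℝ := ↑(Matrix.IsHermitian.eigenvectorUnitary hX) with hVdef
  have hVV : Vᴴ * V = 1 := by
    rw [← Matrix.star_eq_conjTranspose]
    exact Matrix.UnitaryGroup.star_mul_self _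
  have hVV' : V * Vᴴ = 1 := by
    rw [← Matrix.star_eq_conjTranspose]
    exact Matrix.mem_unitaryGroup_iff.mp (Matrix.IsHermitian.eigenvectorUnitary hX).2
  set Y : Matrix (Fin n) (Fin p) ℝ := X * V with hYdef
  have hYY : Yᴴ * Y = Matrix.diagonal lam := by
    have h : star V * (Xᴴ * X) * V = Matrix.diagonal (RCLike.ofReal ∘ hX.eigenvalues) := by
      have h0 := hX.conjStarAlgAut_star_eigenvectorUnitary
      rw [Unitary.conjStarAlgAut_apply, Unitary.coe_star, star_star] at h0
      exact h0
    rw [Matrix.star_eq_conjTranspose] at h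
    have h2 : Yᴴ * Y = Vᴴ * (Xᴴ * X) * V := by
      rw [hYdef, conjTranspose_mul, Matrix.mul_assoc, Matrix.mul_assoc, Matrix.mul_assoc]
    rw [h2, h]
    congr 1
  have hYcol : ∀ j j', (∑ i, Y i j * Y i j') = if j = j' then lam j else 0 := by
    intro j j'
    have h := congrFun (congrFun hYY j) j'
    simpa [Matrix.mul_apply, Matrix.diagonal_apply, Matrix.conjTranspose_apply] using h
  have hlam_nonneg : ∀ j, 0 ≤ lam j := by
    intro j
    have h : (∑ i, Y i j * Y i j) = lam j := by simpa using hYcol j j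
    rw [← h]
    exact Finset.sum_nonneg fun i _ => mul_self_nonneg _
  have hYzero : ∀ j, lam j = 0 → ∀ i, Y i j = 0 := by
    intro j hj i
    have h : ∑ i, Y i j ^ 2 = 0 := by
      simpa [sq, hj] using hYcol j j
    have h2 := (Finset.sum_eq_zero_iff_of_nonneg
      (fun i _ => sq_nonneg (Y i j))).mp h i (Finset.mem_univ i)
    exact pow_eq_zero_iff (two_ne_zero) |>.mp h2
  have hXY : X = Y * Vᴴ := by rw [hYdef, Matrix.mul_assoc, hVV', Matrix.mul_one]
  have hVcol : ∀ j, (∑ l, V l j ^ 2) = 1 := by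
    intro j
    have h := congrFun (congrFun hVV j) j
    simpa [Matrix.mul_apply, Matrix.one_apply, Matrix.conjTranspose_apply, sq] using h
  have hnn : nuclearNorm X = ∑ j, Real.sqrt (lam j) := rfl
  set S : ℝ := ∑ j, Real.sqrt (lam j) with hS
  have hS0 : 0 ≤ S := Finset.sum_nonneg fun j _ => Real.sqrt_nonneg _
  -- membership part
  set s : Fin p → ℝ := fun j => Real.sqrt (Real.sqrt (lam j)) with hs
  set g : Fin p → ℝ := fun j => if lam j = 0 then 0 else (s j)⁻¹ with hg
  have hs_sq : ∀ j, s j ^ 2 = Real.sqrt (lam j) := fun j => Real.sq_sqrt (Real.sqrt_nonneg _)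
  have hs_ne : ∀ j, lam j ≠ 0 → s j ≠ 0 := by
    intro j hj
    have hpos : 0 < lam j := lt_of_le_of_ne (hlam_nonneg j) (Ne.symm hj)
    exact ne_of_gt (Real.sqrt_pos.mpr (Real.sqrt_pos.mpr hpos))
  have hsqrt_ne : ∀ j, lam j ≠ 0 → Real.sqrt (lam j) ≠ 0 := by
    intro j hj
    have hpos : 0 < lam j := lt_of_le_of_ne (hlam_nonneg j) (Ne.symm hj)
    exact ne_of_gt (Real.sqrt_pos.mpr hpos)
  have hfact : X = (Matrix.of fun i j => Y i j * g j) * (Matrix.of fun j l => s j * V l j) := by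
    rw [hXY]
    ext i l
    simp only [Matrix.mul_apply, Matrix.of_apply, Matrix.conjTranspose_apply, star_trivial]
    apply Finset.sum_congr rfl
    intro j _
    by_cases hj : lam j = 0
    · simp [hg, hj, hYzero j hj i]
    · have : g j * s j = 1 := by
        rw [hg]; simp only [hj, if_false]
        exact inv_mul_cancel₀ (hs_ne j hj)
      calc Y i j * V l j = Y i j * (g j * s j) * V l j := by rw [this]; ring
        _ = Y i j * g j * (s j * V l j) := by ring
  have hA2 : (∑ i, ∑ j, (Y i j * g j) ^ 2) = S := by
    rw [Finset.sum_comm, hS]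
    apply Finset.sum_congr rfl
    intro j _
    have hcol : ∑ i, Y i j ^ 2 = lam j := by simpa [sq] using hYcol j j
    have : ∑ i, (Y i j * g j) ^ 2 = (∑ i, Y i j ^ 2) * g j ^ 2 := by
      rw [Finset.sum_mul]
      exact Finset.sum_congr rfl fun i _ => by ring
    rw [this, hcol]
    by_cases hj : lam j = 0
    · simp [hg, hj]
    · rw [hg]; simp only [hj, if_false]
      rw [inv_pow, hs_sq j]
      field_simp
      rw [div_eq_iff (hsqrt_ne j hj), Real.mul_self_sqrt (hlam_nonneg j)]
  have hB2 : (∑ j, ∑ l, (s j * V l j) ^ 2) = S := by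
    rw [hS]
    apply Finset.sum_congr rfl
    intro j _
    have : ∑ l, (s j * V l j) ^ 2 = s j ^ 2 * ∑ l, V l j ^ 2 := by
      rw [Finset.mul_sum]
      exact Finset.sum_congr rfl fun l _ => by ring
    rw [this, hVcol j, mul_one, hs_sq j]
  have hmem : nuclearNorm X = frobNorm (Matrix.of fun i j => Y i j * g j)
      * frobNorm (Matrix.of fun j l => s j * V l j) := by
    unfold frobNorm
    simp only [Matrix.of_apply]
    rw [hA2, hB2, Real.mul_self_sqrt hS0, hnn]
  -- lower bound
  have hlb : ∀ (k : ℕ) (A : Matrix (Fin n) (Fin k) ℝ) (B : Matrix (Fin k) (Fin p) ℝ),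
      X = A * B → S ≤ frobNorm A * frobNorm B := by
    intro k A B hAB
    have hC : Y = A * (B * V) := by rw [hYdef, hAB, Matrix.mul_assoc]
    set C : Matrix (Fin k) (Fin p) ℝ := B * V with hCdef
    set u : Fin p → Fin n → ℝ :=
      fun j i => if lam j = 0 then 0 else (Real.sqrt (lam j))⁻¹ * Y i j with hu
    have stepA : ∀ j, Real.sqrt (lam j) = ∑ m, (∑ i, A i m * u j i) * C m j := by
      intro j
      have e1 : Real.sqrt (lam j) = ∑ i, u j i * Y i j := by
        by_cases hj : lam j = 0
        · simp [hu, hj]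
        · simp only [hu, if_neg hj]
          have e : ∑ i, (Real.sqrt (lam j))⁻¹ * Y i j * Y i j
              = (Real.sqrt (lam j))⁻¹ * ∑ i, Y i j * Y i j := by
            rw [Finset.mul_sum]
            exact Finset.sum_congr rfl fun i _ => by ring
          rw [e]
          have hcol : ∑ i, Y i j * Y i j = lam j := by simpa using hYcol j j
          rw [hcol]
          rw [← Real.mul_self_sqrt (hlam_nonneg j)]
          field_simp
          rw [Real.sqrt_sq (Real.sqrt_nonneg _), sq, mul_self_div_self]
      rw [e1]
      have e2 : ∀ i, u j i * Y i j = ∑ m, (A i m * u j i) * C m j := by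
        intro i
        have hY : Y i j = ∑ m, A i m * C m j := by rw [hC]; simp [Matrix.mul_apply]
        rw [hY, Finset.mul_sum]
        exact Finset.sum_congr rfl fun m _ => by ring
      rw [Finset.sum_congr rfl (fun i _ => e2 i), Finset.sum_comm]
      exact Finset.sum_congr rfl fun m _ => (Finset.sum_mul _ _ _).symm
    have step3 : S ≤ Real.sqrt (∑ j, ∑ m, (∑ i, A i m * u j i) ^ 2)
        * Real.sqrt (∑ j, ∑ m, C m j ^ 2) := by
      have h1 : S = ∑ j, ∑ m, (∑ i, A i m * u j i) * C m j := by
        rw [hS]; exact Finset.sum_congr rfl fun j _ => stepA j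
      have h2 : ∀ j, ∑ m, (∑ i, A i m * u j i) * C m j
          ≤ Real.sqrt (∑ m, (∑ i, A i m * u j i) ^ 2) * Real.sqrt (∑ m, C m j ^ 2) :=
        fun j => cs_sqrt Finset.univ _ _
      have h4 := cs_sqrt Finset.univ (fun j => Real.sqrt (∑ m, (∑ i, A i m * u j i) ^ 2))
        (fun j => Real.sqrt (∑ m, C m j ^ 2))
      simp only [Real.sq_sqrt (Finset.sum_nonneg fun m _ => sq_nonneg _)] at h4
      calc S = ∑ j, ∑ m, (∑ i, A i m * u j i) * C m j := h1
        _ ≤ ∑ j, Real.sqrt (∑ m, (∑ i, A i m * u j i) ^ 2) * Real.sqrt (∑ m, C m j ^ 2) :=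
            Finset.sum_le_sum fun j _ => h2 j
        _ ≤ _ := h4
    have hbessel : (∑ j, ∑ m, (∑ i, A i m * u j i) ^ 2) ≤ ∑ i, ∑ m, A i m ^ 2 := by
      set U : Matrix (Fin n) (Fin p) ℝ := Matrix.of (fun i j => u j i) with hU
      set d : Fin p → ℝ := fun j => if lam j = 0 then 0 else 1 with hd
      have hUU : ∀ j j', (∑ i, u j i * u j' i) = if j = j' then d j else 0 := by
        intro j j'
        by_cases hj : lam j = 0
        · simp [hu, hj, hd]
        · by_cases hj' : lam j' = 0
          · have hne : j ≠ j' := by rintro rfl; exact hj hj'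
            simp [hu, hj', hne]
          · simp only [hu, if_neg hj, if_neg hj']
            have e : ∑ i, ((Real.sqrt (lam j))⁻¹ * Y i j) * ((Real.sqrt (lam j'))⁻¹ * Y i j')
                = (Real.sqrt (lam j))⁻¹ * ((Real.sqrt (lam j'))⁻¹ * ∑ i, Y i j * Y i j') := by
              rw [Finset.mul_sum, Finset.mul_sum]
              exact Finset.sum_congr rfl fun i _ => by ring
            rw [e, hYcol j j']
            by_cases hjj : j = j'
            · subst hjj
              simp only [if_pos rfl, hd, if_neg hj]
              field_simp [hsqrt_ne j hj]
              rw [if_pos trivial, if_pos trivial, mul_one]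
              exact (Real.sq_sqrt (hlam_nonneg j)).symm
            · simp [hjj]
      have hUUm : Uᴴ * U = Matrix.diagonal d := by
        ext j j'
        have := hUU j j'
        simpa [Matrix.mul_apply, Matrix.conjTranspose_apply, hU, Matrix.diagonal_apply] using this
      have hUd : U * Matrix.diagonal d = U := by
        ext i j
        rw [Matrix.mul_diagonal]
        by_cases hj : lam j = 0
        · simp [hU, hu, hj, hd]
        · simp [hd, hj]
      set Q := U * Uᴴ with hQ
      have hQs : Qᴴ = Q := by rw [hQ, conjTranspose_mul, conjTranspose_conjTranspose]
      have hQ2 : Q * Q = Q := by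
        rw [hQ]
        calc U*Uᴴ*(U*Uᴴ) = U*(Uᴴ*U*Uᴴ) := by
              rw [Matrix.mul_assoc U Uᴴ (U*Uᴴ), ← Matrix.mul_assoc Uᴴ U Uᴴ]
          _ = U*(Matrix.diagonal d*Uᴴ) := by rw [hUUm]
          _ = U*Matrix.diagonal d*Uᴴ := by rw [Matrix.mul_assoc]
          _ = U*Uᴴ := by rw [hUd]
      have h1 : (∑ j, ∑ m, (∑ i, A i m * u j i) ^ 2) = ((Uᴴ*A)ᴴ*(Uᴴ*A)).trace := by
        rw [← sq2_eq_trace]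
        refine Finset.sum_congr rfl fun j _ => Finset.sum_congr rfl fun m _ => ?_
        congr 1
        simp only [Matrix.mul_apply, Matrix.conjTranspose_apply, Matrix.of_apply,
          star_trivial, hU]
        exact Finset.sum_congr rfl fun i _ => mul_comm _ _
      have e1 : (Uᴴ*A)ᴴ*(Uᴴ*A) = (Q*A)ᴴ*(Q*A) := by
        rw [conjTranspose_mul, conjTranspose_conjTranspose, conjTranspose_mul, hQs]
        have h5 : Aᴴ*Q*(Q*A) = Aᴴ*Q*A := by
          rw [Matrix.mul_assoc Aᴴ Q (Q*A), ← Matrix.mul_assoc Q Q A, hQ2, ← Matrix.mul_assoc]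
        rw [h5, hQ]
        simp only [Matrix.mul_assoc]
      have h2 : ((Q*A)ᴴ*(Q*A)).trace ≤ (Aᴴ*A).trace := trace_proj_le Q A hQs hQ2
      have h3 : (∑ i, ∑ m, A i m ^ 2) = (Aᴴ*A).trace := sq2_eq_trace A
      rw [h1, e1, h3]
      exact h2
    have hCB : (∑ j, ∑ m, C m j ^ 2) = ∑ m, ∑ l, B m l ^ 2 := by
      have hCC : C * Cᴴ = B * Bᴴ := by
        rw [hCdef, conjTranspose_mul, Matrix.mul_assoc, ← Matrix.mul_assoc V Vᴴ Bᴴ, hVV',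
          Matrix.one_mul]
      rw [Finset.sum_comm, sq2_eq_trace' C, hCC, ← sq2_eq_trace' B]
    calc S ≤ Real.sqrt (∑ j, ∑ m, (∑ i, A i m * u j i) ^ 2)
        * Real.sqrt (∑ j, ∑ m, C m j ^ 2) := step3
      _ ≤ Real.sqrt (∑ i, ∑ m, A i m ^ 2) * Real.sqrt (∑ j, ∑ m, C m j ^ 2) :=
          mul_le_mul_of_nonneg_right (Real.sqrt_le_sqrt hbessel) (Real.sqrt_nonneg _)
      _ = frobNorm A * frobNorm B := by rw [hCB]; rfl
  constructor
  · exact ⟨p, _, _, hfact, hmem⟩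
  · rintro c ⟨k, A, B, hAB, rfl⟩
    rw [hnn]
    exact hlb k A B hAB
end

section
/- If X = UDVᵀ is the singular value decomposition of X and X = AB is any factorization, then tr(D) = tr(UᵀABV), and consequently ‖X‖_* ≤ ‖UᵀA‖_F‖BV‖_F. -/
open Matrix BigOperators

open scoped MatrixOrder in
/-- For an SVD, the nuclear norm equals the trace of the diagonal factor. -/
theorem nuclearNorm_eq_trace_aux (n p r : ℕ) (X : Matrix (Fin n) (Fin p) ℝ)
    (U : Matrix (Fin n) (Fin r) ℝ) (V : Matrix (Fin p) (Fin r) ℝ) (d : Fin r → ℝ)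
    (hU : Uᵀ * U = 1) (hV : Vᵀ * V = 1) (hd : ∀ i, 0 ≤ d i)
    (hSVD : X = U * Matrix.diagonal d * Vᵀ) :
    nuclearNorm X = Matrix.trace (Matrix.diagonal d) := by
  have hPS : (Xᴴ * X).PosSemidef := Matrix.posSemidef_conjTranspose_mul_self X
  have hXc : Xᴴ = Xᵀ := Matrix.conjTranspose_eq_transpose_of_trivial X
  have hS : (V * Matrix.diagonal d * Vᵀ).PosSemidef := by
    have := (Matrix.PosSemidef.mul_mul_conjTranspose_same
      ((Matrix.posSemidef_diagonal_iff.mpr hd)) V)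
    simpa [Matrix.conjTranspose_eq_transpose_of_trivial] using this
  have hsq : (V * Matrix.diagonal d * Vᵀ) ^ 2 = Xᴴ * X := by
    rw [hXc, hSVD, pow_two]
    simp only [Matrix.transpose_mul, Matrix.diagonal_transpose, Matrix.transpose_transpose]
    have e1 : Vᵀ * (V * (Matrix.diagonal d * Vᵀ)) = Matrix.diagonal d * Vᵀ := by
      rw [← Matrix.mul_assoc, hV, Matrix.one_mul]
    have e2 : Uᵀ * (U * (Matrix.diagonal d * Vᵀ)) = Matrix.diagonal d * Vᵀ := by
      rw [← Matrix.mul_assoc, hU, Matrix.one_mul]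
    simp only [Matrix.mul_assoc]
    rw [e1, e2]
  have hsqrt : V * Matrix.diagonal d * Vᵀ = CFC.sqrt (Xᴴ * X) := by
    rw [eq_comm, CFC.sqrt_eq_iff _ _ hPS.nonneg hS.nonneg, ← sq, hsq]
  have h1 : Matrix.trace (CFC.sqrt (Xᴴ * X)) = Matrix.trace (Matrix.diagonal d) := by
    rw [← hsqrt, Matrix.trace_mul_comm, ← Matrix.mul_assoc, hV, Matrix.one_mul]
  have h2 : Matrix.trace (CFC.sqrt (Xᴴ * X)) = nuclearNorm X := by
    rw [CFC.sqrt_eq_cfc, cfc_nnreal_eq_real _ (Xᴴ * X), hPS.1.cfc_eq, Matrix.IsHermitian.cfc,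
      Unitary.conjStarAlgAut_apply, Matrix.trace_mul_comm, ← Matrix.mul_assoc,
      Unitary.coe_star_mul_self, Matrix.one_mul, Matrix.trace_diagonal]
    simp only [Function.comp_apply, Real.coe_sqrt, Real.coe_toNNReal', RCLike.ofReal_real_eq_id, id]
    unfold nuclearNorm
    refine Finset.sum_congr rfl fun i _ => ?_
    rw [max_eq_left (hPS.eigenvalues_nonneg i)]
  rw [← h2, h1]

/-- for an SVD `X = U D Vᵀ` and any factorization `X = A B`,
`tr(D) = tr(Uᵀ A B V)`, and consequently `‖X‖_* ≤ ‖Uᵀ A‖_F ‖B V‖_F`. -/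
theorem trace_eq_and_nuclearNorm_le (n p r k : ℕ)
    (X : Matrix (Fin n) (Fin p) ℝ) (U : Matrix (Fin n) (Fin r) ℝ)
    (V : Matrix (Fin p) (Fin r) ℝ) (d : Fin r → ℝ)
    (A : Matrix (Fin n) (Fin k) ℝ) (B : Matrix (Fin k) (Fin p) ℝ)
    (hU : Uᵀ * U = 1) (hV : Vᵀ * V = 1) (hd : ∀ i, 0 < d i)
    (hSVD : X = U * Matrix.diagonal d * Vᵀ) (hfact : X = A * B) :
    Matrix.trace (Matrix.diagonal d) = Matrix.trace (Uᵀ * A * B * V) ∧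
      nuclearNorm X ≤ frobNorm (Uᵀ * A) * frobNorm (B * V) := by
  have hdiag : Uᵀ * A * B * V = Matrix.diagonal d := by
    have : Uᵀ * A * B * V = Uᵀ * X * V := by
      rw [hfact]; simp only [Matrix.mul_assoc]
    rw [this, hSVD]
    calc Uᵀ * (U * Matrix.diagonal d * Vᵀ) * V
        = (Uᵀ * U) * Matrix.diagonal d * (Vᵀ * V) := by simp only [Matrix.mul_assoc]
      _ = Matrix.diagonal d := by rw [hU, hV, Matrix.one_mul, Matrix.mul_one]
  refine ⟨by rw [hdiag], ?_⟩
  have hnn : nuclearNorm X = Matrix.trace (Matrix.diagonal d) :=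
    nuclearNorm_eq_trace_aux n p r X U V d hU hV (fun i => (hd i).le) hSVD
  -- trace (diagonal d) = trace ((Uᵀ*A) * (B*V)) as a sum over pairs
  set P := Uᵀ * A with hP
  set Q := B * V with hQ
  have htr : Matrix.trace (Matrix.diagonal d) = ∑ ij : Fin r × Fin k, P ij.1 ij.2 * Q ij.2 ij.1 := by
    rw [← hdiag]
    have : Uᵀ * A * B * V = P * Q := by rw [hP, hQ]; simp only [Matrix.mul_assoc]
    rw [this]
    simp [Matrix.trace, Matrix.mul_apply, Matrix.diag, Fintype.sum_prod_type]
  have hcs := Finset.sum_mul_sq_le_sq_mul_sq Finset.univ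
    (fun ij : Fin r × Fin k => P ij.1 ij.2) (fun ij : Fin r × Fin k => Q ij.2 ij.1)
  have htd : 0 ≤ Matrix.trace (Matrix.diagonal d) := by
    rw [Matrix.trace_diagonal]
    exact Finset.sum_nonneg fun i _ => (hd i).le
  have hP2 : ∑ ij : Fin r × Fin k, (P ij.1 ij.2) ^ 2 = ∑ i, ∑ j, (P i j) ^ 2 := by
    rw [Fintype.sum_prod_type]
  have hQ2 : ∑ ij : Fin r × Fin k, (Q ij.2 ij.1) ^ 2 = ∑ i, ∑ j, (Q i j) ^ 2 := by
    rw [Fintype.sum_prod_type]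
    exact Finset.sum_comm
  rw [hnn, frobNorm, frobNorm, ← Real.sqrt_mul (Finset.sum_nonneg fun i _ =>
    Finset.sum_nonneg fun j _ => sq_nonneg (P i j))]
  rw [← Real.sqrt_sq htd]
  apply Real.sqrt_le_sqrt
  calc Matrix.trace (Matrix.diagonal d) ^ 2
      = (∑ ij : Fin r × Fin k, P ij.1 ij.2 * Q ij.2 ij.1) ^ 2 := by rw [htr]
    _ ≤ (∑ ij : Fin r × Fin k, (P ij.1 ij.2) ^ 2) *
        (∑ ij : Fin r × Fin k, (Q ij.2 ij.1) ^ 2) := hcs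
    _ = (∑ i, ∑ j, (P i j) ^ 2) * (∑ i, ∑ j, (Q i j) ^ 2) := by rw [hP2, hQ2]
end

section
/- Under the GAS model with identifiability conditions, if U1 = 0, U2 = 0, V1ᵀV1 = c·I and V2ᵀV2 = (1−c)·I for some constant 0 < c < 1, then the association coefficient ρ(X1, X2) = 1. -/
open Matrix BigOperators Polynomial

/-- Characteristic polynomial is invariant under conjugation by an invertible matrix. -/
lemma charpoly_conj_aux {n R : Type*} [Fintype n] [DecidableEq n] [CommRing R]
    (P Q A : Matrix n n R) (hPQ : P * Q = 1) (hQP : Q * P = 1) :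
    (P * A * Q).charpoly = A.charpoly := by
  unfold Matrix.charpoly
  have h : charmatrix (P * A * Q) =
      (C : R →+* R[X]).mapMatrix P * charmatrix A * (C : R →+* R[X]).mapMatrix Q := by
    unfold charmatrix
    rw [Matrix.mul_sub, Matrix.sub_mul]
    congr 1
    · rw [scalar_apply, ← Matrix.smul_one_eq_diagonal, mul_smul_comm, Matrix.mul_one,
        Matrix.smul_mul, ← _root_.map_mul, hPQ, _root_.map_one]
    · rw [← _root_.map_mul, ← _root_.map_mul]
  rw [h, det_mul, det_mul, mul_right_comm]
  have h2 : (C.mapMatrix P).det * (C.mapMatrix Q).det = 1 := by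
    rw [← det_mul, ← _root_.map_mul (C : R →+* R[X]).mapMatrix, hPQ, _root_.map_one, det_one]
  rw [h2, one_mul]

/-- If a real Hermitian matrix is unitarily conjugate to a real diagonal matrix, its multiset
of eigenvalues equals the multiset of diagonal entries. -/
lemma eig_multiset_aux {n : Type*} [Fintype n] [DecidableEq n] [LinearOrder n]
    {M : Matrix n n ℝ} (hM : M.IsHermitian) (v : n → ℝ) (U : Matrix n n ℝ)
    (hU : U ∈ Matrix.unitaryGroup n ℝ)
    (h : M = U * Matrix.diagonal v * star U) :
    Finset.univ.val.map hM.eigenvalues = Finset.univ.val.map v := by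
  have hchd : ∀ w : n → ℝ, (Matrix.diagonal w).charpoly =
      ((Finset.univ.val.map w).map fun a => X - C a).prod := by
    intro w
    rw [Matrix.charpoly_of_upperTriangular _ (Matrix.blockTriangular_diagonal w)]
    simp only [Matrix.diagonal_apply_eq]
    rw [Finset.prod_eq_multiset_prod, Multiset.map_map]
    rfl
  have h1 : M.charpoly = (Matrix.diagonal v).charpoly := by
    rw [h]
    exact charpoly_conj_aux U (star U) _ (Matrix.mem_unitaryGroup_iff.mp hU)
      (Matrix.mem_unitaryGroup_iff'.mp hU)
  have h2 : M.charpoly = (Matrix.diagonal hM.eigenvalues).charpoly := by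
    have hs := hM.spectral_theorem
    rw [RCLike.ofReal_real_eq_id, Function.id_comp] at hs
    conv_lhs => rw [hs]
    exact charpoly_conj_aux _ _ _
      (Matrix.mem_unitaryGroup_iff.mp (hM.eigenvectorUnitary).2)
      (Matrix.mem_unitaryGroup_iff'.mp (hM.eigenvectorUnitary).2)
  have := h2.symm.trans h1
  rw [hchd, hchd] at this
  have := congrArg Polynomial.roots this
  rwa [Polynomial.roots_multiset_prod_X_sub_C, Polynomial.roots_multiset_prod_X_sub_C] at this

/-- The nuclear-norm sum of square roots of eigenvalues of `M = N * N` for `N` PSD equals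
the trace of `N`. -/
lemma sum_sqrt_eig_aux {n : Type*} [Fintype n] [DecidableEq n] [LinearOrder n]
    (M N : Matrix n n ℝ) (hM : M.IsHermitian) (hN : N.PosSemidef) (hMN : M = N * N) :
    ∑ i, Real.sqrt (hM.eigenvalues i) = N.trace := by
  have hNh : N.IsHermitian := hN.1
  have hs := hNh.spectral_theorem
  rw [RCLike.ofReal_real_eq_id, Function.id_comp, Unitary.conjStarAlgAut_apply] at hs
  set U : Matrix n n ℝ := (hNh.eigenvectorUnitary : Matrix n n ℝ) with hUdef
  have hU : U ∈ Matrix.unitaryGroup n ℝ := (hNh.eigenvectorUnitary).2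
  have hsU : star U * U = 1 := Matrix.mem_unitaryGroup_iff'.mp hU
  set ν : n → ℝ := hNh.eigenvalues with hν
  have hdecomp : M = U * Matrix.diagonal (ν * ν) * star U := by
    have key : star U * (U * Matrix.diagonal ν * star U) = Matrix.diagonal ν * star U := by
      rw [← Matrix.mul_assoc, ← Matrix.mul_assoc, hsU, Matrix.one_mul]
    calc M = N * N := hMN
      _ = (U * Matrix.diagonal ν * star U) * (U * Matrix.diagonal ν * star U) := by
          conv_lhs => rw [hs]
      _ = U * Matrix.diagonal ν * (star U * (U * Matrix.diagonal ν * star U)) := by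
          rw [Matrix.mul_assoc]
      _ = U * Matrix.diagonal ν * (Matrix.diagonal ν * star U) := by rw [key]
      _ = U * (Matrix.diagonal ν * Matrix.diagonal ν) * star U := by
          simp only [Matrix.mul_assoc]
      _ = U * Matrix.diagonal (ν * ν) * star U := by rw [Matrix.diagonal_mul_diagonal]; rfl
  have hmult := eig_multiset_aux hM (ν * ν) U hU hdecomp
  have hnn : ∀ i, 0 ≤ ν i := fun i => hN.eigenvalues_nonneg i
  have hsum : ∑ i, Real.sqrt (hM.eigenvalues i) = ∑ i, Real.sqrt ((ν * ν) i) := by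
    have e1 : ∑ i, Real.sqrt (hM.eigenvalues i)
        = ((Finset.univ.val.map hM.eigenvalues).map Real.sqrt).sum := by
      rw [Multiset.map_map]; rfl
    have e2 : ∑ i, Real.sqrt ((ν * ν) i)
        = ((Finset.univ.val.map (ν * ν)).map Real.sqrt).sum := by
      rw [Multiset.map_map]; rfl
    rw [e1, e2, hmult]
  rw [hsum]
  have : ∀ i ∈ Finset.univ, Real.sqrt ((ν * ν) i) = ν i := fun i _ => by
    rw [Pi.mul_apply]; exact Real.sqrt_mul_self (hnn i)
  rw [Finset.sum_congr rfl this]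
  conv_rhs => rw [hs]
  rw [Matrix.trace_mul_cycle, hsU, Matrix.one_mul, Matrix.trace_diagonal]


lemma frob_sq_eq_trace {m n : Type*} [Fintype m] [Fintype n] (X : Matrix m n ℝ) :
    ∑ i, ∑ j, (X i j) ^ 2 = (Xᵀ * X).trace := by
  rw [Finset.sum_comm]
  simp only [Matrix.trace, Matrix.diag, Matrix.mul_apply, Matrix.transpose_apply, pow_two]

/-- with no individual structure and balanced joint loadings,
the association coefficient equals one. -/
theorem assoc_coeff_eq_one_gas (n p1 p2 r0 : ℕ)
    (U0 : Matrix (Fin n) (Fin r0) ℝ)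
    (V1 : Matrix (Fin p1) (Fin r0) ℝ) (V2 : Matrix (Fin p2) (Fin r0) ℝ)
    (d : Fin r0 → ℝ) (c : ℝ)
    (hU0 : U0 ≠ 0) (hU0diag : U0ᵀ * U0 = Matrix.diagonal d) (hd : ∀ i, 0 < d i)
    (hc0 : 0 < c) (hc1 : c < 1)
    (hV1 : V1ᵀ * V1 = c • (1 : Matrix (Fin r0) (Fin r0) ℝ))
    (hV2 : V2ᵀ * V2 = (1 - c) • (1 : Matrix (Fin r0) (Fin r0) ℝ)) :
    nuclearNorm ((U0 * V1ᵀ)ᵀ * (U0 * V2ᵀ)) /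
        (frobNorm (U0 * V1ᵀ) * frobNorm (U0 * V2ᵀ)) = 1 := by
  have h1c : (0:ℝ) < 1 - c := by linarith
  -- r0 is nonzero and the sum of d is positive
  have hr0 : 0 < r0 := by
    rcases Nat.eq_zero_or_pos r0 with h | h
    · subst h; exact absurd (Matrix.ext fun i (j : Fin 0) => j.elim0) hU0
    · exact h
  haveI : Nonempty (Fin r0) := ⟨⟨0, hr0⟩⟩
  set S := ∑ i, d i with hSdef
  have hS : 0 < S := Finset.sum_pos (fun i _ => hd i) Finset.univ_nonempty
  -- product structure
  have hprod : ∀ {q1 q2 : ℕ} (W1 : Matrix (Fin q1) (Fin r0) ℝ)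
      (W2 : Matrix (Fin q2) (Fin r0) ℝ),
      (U0 * W1ᵀ)ᵀ * (U0 * W2ᵀ) = W1 * Matrix.diagonal d * W2ᵀ := by
    intro q1 q2 W1 W2
    rw [Matrix.transpose_mul, Matrix.transpose_transpose, Matrix.mul_assoc,
      ← Matrix.mul_assoc U0ᵀ U0 W2ᵀ, hU0diag, ← Matrix.mul_assoc]
  have habs1 : ∀ {q : ℕ} (Z : Matrix (Fin r0) (Fin q) ℝ), V1ᵀ * (V1 * Z) = c • Z := by
    intro q Z; rw [← Matrix.mul_assoc, hV1, Matrix.smul_mul, Matrix.one_mul]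
  have habs2 : ∀ {q : ℕ} (Z : Matrix (Fin r0) (Fin q) ℝ),
      V2ᵀ * (V2 * Z) = (1 - c) • Z := by
    intro q Z; rw [← Matrix.mul_assoc, hV2, Matrix.smul_mul, Matrix.one_mul]
  -- the matrix X and its conjugate transpose
  have hX : (U0 * V1ᵀ)ᵀ * (U0 * V2ᵀ) = V1 * Matrix.diagonal d * V2ᵀ := hprod V1 V2
  have hXH : (V1 * Matrix.diagonal d * V2ᵀ)ᴴ = V2 * Matrix.diagonal d * V1ᵀ := by
    rw [Matrix.conjTranspose_eq_transpose_of_trivial, Matrix.transpose_mul,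
      Matrix.transpose_mul, Matrix.transpose_transpose, Matrix.diagonal_transpose,
      ← Matrix.mul_assoc]
  -- the PSD square root N
  set g : Fin r0 → ℝ := fun i => Real.sqrt (c / (1 - c)) * d i with hgdef
  have hgnn : ∀ i, 0 ≤ g i := fun i =>
    mul_nonneg (Real.sqrt_nonneg _) (hd i).le
  have hsq : Real.sqrt (c / (1 - c)) * Real.sqrt (c / (1 - c)) = c / (1 - c) :=
    Real.mul_self_sqrt (by positivity)
  set N : Matrix (Fin p2) (Fin p2) ℝ := V2 * Matrix.diagonal g * V2ᵀ with hNdef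
  -- N is positive semidefinite
  have hNpsd : N.PosSemidef := by
    have hB : (Matrix.diagonal (fun i => Real.sqrt (g i)) * V2ᵀ)ᴴ *
        (Matrix.diagonal (fun i => Real.sqrt (g i)) * V2ᵀ) = N := by
      rw [Matrix.conjTranspose_eq_transpose_of_trivial, Matrix.transpose_mul,
        Matrix.transpose_transpose, Matrix.diagonal_transpose, hNdef,
        Matrix.mul_assoc, Matrix.mul_assoc, ← Matrix.mul_assoc (Matrix.diagonal _),
        Matrix.diagonal_mul_diagonal]
      rw [show (fun i => Real.sqrt (g i) * Real.sqrt (g i)) = g from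
        funext fun i => Real.mul_self_sqrt (hgnn i)]
    exact hB ▸ Matrix.posSemidef_conjTranspose_mul_self _
  -- M = N * N
  have hMN : ((U0 * V1ᵀ)ᵀ * (U0 * V2ᵀ))ᴴ * ((U0 * V1ᵀ)ᵀ * (U0 * V2ᵀ)) = N * N := by
    rw [hX, hXH]
    have e1 : V2 * Matrix.diagonal d * V1ᵀ * (V1 * Matrix.diagonal d * V2ᵀ)
        = V2 * (c • (Matrix.diagonal (d * d) * V2ᵀ)) := by
      simp only [Matrix.mul_assoc]
      rw [habs1, Matrix.mul_smul, ← Matrix.mul_assoc (Matrix.diagonal d),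
        Matrix.diagonal_mul_diagonal]
      rfl
    have e2 : N * N = V2 * ((1 - c) • (Matrix.diagonal (g * g) * V2ᵀ)) := by
      rw [hNdef]
      simp only [Matrix.mul_assoc]
      rw [habs2, Matrix.mul_smul, ← Matrix.mul_assoc (Matrix.diagonal g),
        Matrix.diagonal_mul_diagonal]
      rfl
    rw [e1, e2]
    congr 1
    rw [← Matrix.smul_mul, ← Matrix.smul_mul]
    congr 1
    ext i j
    rcases eq_or_ne i j with rfl | hij
    · simp only [Matrix.smul_apply, Matrix.diagonal_apply_eq, Pi.mul_apply, smul_eq_mul]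
      have hg2 : g i * g i = c / (1 - c) * (d i * d i) := by
        show (Real.sqrt (c / (1 - c)) * d i) * (Real.sqrt (c / (1 - c)) * d i) = _
        rw [mul_mul_mul_comm, hsq]
      rw [hg2]
      field_simp
    · simp [Matrix.diagonal_apply_ne _ hij]
  -- the nuclear norm equals the trace of N
  have hnuc : nuclearNorm ((U0 * V1ᵀ)ᵀ * (U0 * V2ᵀ)) = N.trace := by
    rw [nuclearNorm]
    exact sum_sqrt_eig_aux _ N (Matrix.isHermitian_conjTranspose_mul_self _) hNpsd hMN
  -- trace of N
  have htr : N.trace = Real.sqrt c * Real.sqrt (1 - c) * S := by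
    rw [hNdef, Matrix.trace_mul_cycle, hV2, Matrix.smul_mul, Matrix.one_mul,
      Matrix.trace_smul, Matrix.trace_diagonal]
    have : ∑ i, g i = Real.sqrt (c / (1 - c)) * S := by
      rw [hgdef, hSdef, Finset.mul_sum]
    rw [this, smul_eq_mul]
    have hid : (1 - c) * Real.sqrt (c / (1 - c)) = Real.sqrt c * Real.sqrt (1 - c) := by
      rw [Real.sqrt_div hc0.le]
      calc (1 - c) * (Real.sqrt c / Real.sqrt (1 - c))
          = Real.sqrt c * ((1 - c) / Real.sqrt (1 - c)) := by ring
        _ = Real.sqrt c * Real.sqrt (1 - c) := by rw [Real.div_sqrt]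
    rw [← mul_assoc, hid]
  -- Frobenius norms
  have hfrob : ∀ {q : ℕ} (W : Matrix (Fin q) (Fin r0) ℝ) (t : ℝ),
      Wᵀ * W = t • (1 : Matrix (Fin r0) (Fin r0) ℝ) →
      frobNorm (U0 * Wᵀ) = Real.sqrt (t * S) := by
    intro q W t hW
    rw [frobNorm, frob_sq_eq_trace, hprod W W, Matrix.trace_mul_cycle, hW,
      Matrix.smul_mul, Matrix.one_mul, Matrix.trace_smul, Matrix.trace_diagonal,
      smul_eq_mul, ← hSdef]
  rw [hnuc, htr, hfrob V1 c hV1, hfrob V2 (1 - c) hV2,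
    Real.sqrt_mul hc0.le, Real.sqrt_mul h1c.le]
  have hkey : Real.sqrt c * Real.sqrt S * (Real.sqrt (1 - c) * Real.sqrt S)
      = Real.sqrt c * Real.sqrt (1 - c) * S := by
    rw [show Real.sqrt c * Real.sqrt S * (Real.sqrt (1 - c) * Real.sqrt S)
        = Real.sqrt c * Real.sqrt (1 - c) * (Real.sqrt S * Real.sqrt S) by ring,
      Real.mul_self_sqrt hS.le]
  rw [hkey]
  have hpos : 0 < Real.sqrt c * Real.sqrt (1 - c) * S :=
    mul_pos (mul_pos (Real.sqrt_pos.mpr hc0) (Real.sqrt_pos.mpr h1c)) hS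
  exact div_self hpos.ne'
end
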